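/- Let z : [1, ∞) → Δ(A) be an absolutely continuous solution of continuous fictitious play in a finite two-player game, i.e., ż(t) = (1/t)(q̄(t) − z(t)) for a.e. t, where q̄(t) = q_1(t) ⊗ q_2(t) and q_i(t) is a mixed best reply of player i to z_{-i}(t). Then for each player i, the maximal regret v_i(t) := max_{k ∈ A_i} u_i(k, z_{-i}(t)) − u_i(z(t)) satisfies v̇_i(t) = −(1/t) v_i(t) for a.e. t where v_i(t) > 0; consequently [v_i(t)]_+ ≤ (1/t)[v_i(1)]_+ → 0, and z(t) converges to the reduced Hannan set. -/

import Mathlib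

open Finset MeasureTheory Filter

lemma ftc_ae_nonneg (g : ℝ → ℝ) (hm : Measurable g) (hnn : ∀ x, 0 ≤ g x)
    (hi : ∀ a b : ℝ, IntervalIntegrable g volume a b) :
    ∀ᵐ x, HasDerivAt (fun t => ∫ s in (1:ℝ)..t, g s) (g x) x := by
  set F : ℝ → ℝ := fun t => ∫ s in (1:ℝ)..t, g s with hF
  have hsub : ∀ a b : ℝ, F b - F a = ∫ s in a..b, g s := fun a b =>
    intervalIntegral.integral_interval_sub_left (hi 1 b) (hi 1 a)
  have hmono : Monotone F := by
    intro a b hab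
    have h2 : (0:ℝ) ≤ ∫ s in a..b, g s := intervalIntegral.integral_nonneg hab (fun u _ => hnn u)
    have := hsub a b
    linarith
  have hcont : Continuous F := intervalIntegral.continuous_primitive hi 1
  set S : StieltjesFunction ℝ := ⟨F, hmono, fun x => hcont.continuousAt.continuousWithinAt⟩ with hS
  have hμ : S.measure = volume.withDensity (fun x => ENNReal.ofReal (g x)) := by
    refine Measure.ext_of_Ioc _ _ (fun a b hab => ?_)
    rw [S.measure_Ioc, withDensity_apply _ measurableSet_Ioc]
    have h1 : (∫⁻ x in Set.Ioc a b, ENNReal.ofReal (g x)) = ENNReal.ofReal (∫ x in Set.Ioc a b, g x) :=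
      (MeasureTheory.ofReal_integral_eq_lintegral_ofReal (hi a b).1
        (Filter.Eventually.of_forall fun x => hnn x)).symm
    rw [h1]
    congr 1
    have : S b - S a = ∫ s in a..b, g s := hsub a b
    rw [this, intervalIntegral.integral_of_le hab.le]
  have hrn : (S.measure.rnDeriv volume) =ᵐ[volume] fun x => ENNReal.ofReal (g x) := by
    rw [hμ]; exact Measure.rnDeriv_withDensity volume hm.ennreal_ofReal
  filter_upwards [S.ae_hasDerivAt, hrn] with x hx h2
  have h3 : (S.measure.rnDeriv volume x).toReal = g x := by
    rw [h2]; exact ENNReal.toReal_ofReal (hnn x)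
  rw [h3] at hx
  exact hx

lemma ftc_ae (g : ℝ → ℝ) (hi : ∀ a b : ℝ, IntervalIntegrable g volume a b) :
    ∀ᵐ x, HasDerivAt (fun t => ∫ s in (1:ℝ)..t, g s) (g x) x := by
  have huniv : (Set.univ : Set ℝ) = ⋃ n : ℕ, Set.Ioc (-(n:ℝ)) n := by
    ext x
    simp only [Set.mem_univ, Set.mem_iUnion, Set.mem_Ioc, true_iff]
    obtain ⟨n, hn⟩ := exists_nat_gt |x|
    exact ⟨n, by cases abs_lt.1 hn; linarith, by cases abs_lt.1 hn; linarith⟩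
  have hae : AEStronglyMeasurable g volume := by
    have h2 : AEStronglyMeasurable g (volume.restrict (⋃ n : ℕ, Set.Ioc (-(n:ℝ)) n)) := by
      rw [aestronglyMeasurable_iUnion_iff]
      intro n; exact (hi (-(n:ℝ)) n).1.aestronglyMeasurable
    rwa [← huniv, Measure.restrict_univ] at h2
  set gm : ℝ → ℝ := hae.mk g with hgm
  have hmeas : Measurable gm := hae.stronglyMeasurable_mk.measurable
  have geq : g =ᵐ[volume] gm := hae.ae_eq_mk
  have him : ∀ a b : ℝ, IntervalIntegrable gm volume a b := fun a b =>
    ⟨(hi a b).1.congr (ae_restrict_of_ae geq), (hi a b).2.congr (ae_restrict_of_ae geq)⟩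
  set gp : ℝ → ℝ := fun x => max (gm x) 0 with hgp
  set gn : ℝ → ℝ := fun x => max (-gm x) 0 with hgn
  have hip : ∀ a b : ℝ, IntervalIntegrable gp volume a b := fun a b =>
    ⟨(him a b).1.pos_part, (him a b).2.pos_part⟩
  have hin : ∀ a b : ℝ, IntervalIntegrable gn volume a b := fun a b =>
    ⟨(him a b).1.neg.pos_part, (him a b).2.neg.pos_part⟩
  have hdec : ∀ x, gp x - gn x = gm x := by
    intro x
    rcases le_total 0 (gm x) with h | h
    · simp [hgp, hgn, max_eq_left h, max_eq_right (neg_nonpos.2 h)]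
    · simp [hgp, hgn, max_eq_right h, max_eq_left (neg_nonneg.2 h)]
  have hFeq : (fun t => ∫ s in (1:ℝ)..t, g s)
      = fun t => (∫ s in (1:ℝ)..t, gp s) - ∫ s in (1:ℝ)..t, gn s := by
    funext t
    rw [← intervalIntegral.integral_sub (hip 1 t) (hin 1 t)]
    refine intervalIntegral.integral_congr_ae ?_
    filter_upwards [geq] with x hx _
    rw [hx, hdec x]
  filter_upwards [ftc_ae_nonneg gp (hmeas.max measurable_const) (fun x => le_max_right _ _) hip,
    ftc_ae_nonneg gn (hmeas.neg.max measurable_const) (fun x => le_max_right _ _) hin,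
    geq] with x hp hn hx
  rw [hFeq, hx, ← hdec x]
  exact hp.sub hn

lemma const_of_lip_deriv (f : ℝ → ℝ) (T C : ℝ) (hT : 1 ≤ T) (hC : 0 ≤ C)
    (hlip : ∀ s ∈ Set.Icc (1:ℝ) T, ∀ t ∈ Set.Icc (1:ℝ) T, |f t - f s| ≤ C * |t - s|)
    (hder : ∀ᵐ x, x ∈ Set.Ioo (1:ℝ) T → ∀ D, HasDerivAt f D x → D = 0) :
    f T = f 1 := by
  set c : ℝ → ℝ := fun t => max (min t T) 1 with hc
  have hcmem : ∀ t, c t ∈ Set.Icc (1:ℝ) T := fun t =>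
    ⟨le_max_right _ _, max_le (min_le_right _ _) hT⟩
  have hclip : ∀ a b : ℝ, |c b - c a| ≤ |b - a| := by
    intro a b
    refine (abs_max_sub_max_le_abs _ _ _).trans ?_
    refine (abs_min_sub_min_le_max _ _ _ _).trans ?_
    simp
  have hcmono : Monotone c := fun a b hab =>
    max_le_max (min_le_min hab le_rfl) le_rfl
  set m : ℝ → ℝ := fun t => f (c t) with hm
  have hmdiff : ∀ a b : ℝ, |m b - m a| ≤ C * (max b a - min b a) := by
    intro a b
    refine (hlip _ (hcmem a) _ (hcmem b)).trans ?_
    have := hclip a b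
    have h2 : |b - a| = max b a - min b a := by
      rcases le_total a b with h | h
      · rw [abs_of_nonneg (by linarith), max_eq_left h, min_eq_right h]
      · rw [abs_of_nonpos (by linarith), max_eq_right h, min_eq_left h]; ring
    nlinarith [abs_nonneg (c b - c a)]
  have mono1 : Monotone (fun t => m t + C * t) := by
    intro a b hab
    have := hmdiff a b
    have h2 : m a - m b ≤ |m b - m a| := by rw [abs_sub_comm]; exact le_abs_self _
    simp only [sup_eq_left.mpr hab, inf_eq_right.mpr hab] at this
    simp only; nlinarith
  have mono2 : Monotone (fun t => C * t - m t) := by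
    intro a b hab
    have := hmdiff a b
    have h2 : m b - m a ≤ |m b - m a| := le_abs_self _
    simp only [sup_eq_left.mpr hab, inf_eq_right.mpr hab] at this
    simp only; nlinarith
  have hfc : ContinuousOn f (Set.Icc 1 T) := by
    refine LipschitzOnWith.continuousOn (K := C.toNNReal) ?_
    rw [lipschitzOnWith_iff_dist_le_mul]
    intro x hx y hy
    rw [Real.dist_eq, Real.dist_eq]
    simpa [Real.coe_toNNReal C hC] using hlip y hy x hx
  have hmc : Continuous m :=
    hfc.comp_continuous ((continuous_id.min continuous_const).max continuous_const) hcmem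
  set s1 : StieltjesFunction ℝ := ⟨fun t => m t + C * t, mono1,
    fun x => ((hmc.add (continuous_const.mul continuous_id)).continuousAt).continuousWithinAt⟩ with hs1
  set s2 : StieltjesFunction ℝ := ⟨fun t => C * t - m t, mono2,
    fun x => (((continuous_const.mul continuous_id).sub hmc).continuousAt).continuousWithinAt⟩ with hs2
  have hsum : s1.measure + s2.measure = (ENNReal.ofReal (2 * C)) • volume := by
    refine Measure.ext_of_Ioc' _ _ (fun a b hab => ?_) (fun a b hab => ?_)
    · rw [Measure.add_apply, s1.measure_Ioc, s2.measure_Ioc]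
      exact ENNReal.add_ne_top.2 ⟨ENNReal.ofReal_ne_top, ENNReal.ofReal_ne_top⟩
    rw [Measure.add_apply, s1.measure_Ioc, s2.measure_Ioc, Measure.smul_apply,
      Real.volume_Ioc, smul_eq_mul, ← ENNReal.ofReal_mul (by linarith)]
    rw [← ENNReal.ofReal_add (by simpa using mono1 hab.le) (sub_nonneg.2 (s2.mono hab.le))]
    congr 1
    simp only [hs1, hs2]
    ring
  have hle : s1.measure ≤ (ENNReal.ofReal (2 * C)) • volume := by
    rw [← hsum]; exact Measure.le_add_right le_rfl
  have hac : s1.measure ≪ volume := by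
    intro s hs
    have := hle s
    rw [Measure.smul_apply, hs, smul_eq_mul, mul_zero] at this
    exact le_antisymm this zero_le
  have hrnC : ∀ᵐ x, x ∈ Set.Ioo (1:ℝ) T → s1.measure.rnDeriv volume x = ENNReal.ofReal C := by
    filter_upwards [s1.ae_hasDerivAt, Measure.rnDeriv_lt_top s1.measure volume, hder]
      with x hx hlt hd hmem
    have hev : (fun y => f y + C * y) =ᶠ[nhds x] ⇑s1 := by
      filter_upwards [isOpen_Ioo.mem_nhds hmem] with y hy
      have : c y = y := by
        rw [hc]; simp only
        rw [min_eq_left hy.2.le, max_eq_left hy.1.le]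
      simp [hs1, hm, this]
    have hx2 : HasDerivAt (fun y => f y + C * y)
        ((s1.measure.rnDeriv volume x).toReal) x := hx.congr_of_eventuallyEq hev
    have hx3 : HasDerivAt f ((s1.measure.rnDeriv volume x).toReal - C) x := by
      simpa [Pi.sub_def] using hx2.sub ((hasDerivAt_id x).const_mul C)
    have h0 := hd hmem _ hx3
    have h4 : (s1.measure.rnDeriv volume x).toReal = C := by linarith
    rw [← h4, ENNReal.ofReal_toReal hlt.ne]
  have hIoc : s1.measure (Set.Ioc 1 T) = ENNReal.ofReal (C * (T - 1)) := by
    conv_lhs => rw [← Measure.withDensity_rnDeriv_eq s1.measure volume hac]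
    rw [withDensity_apply _ measurableSet_Ioc,
      ← Measure.restrict_congr_set Ioo_ae_eq_Ioc]
    have : ∀ᵐ x ∂(volume.restrict (Set.Ioo (1:ℝ) T)),
        s1.measure.rnDeriv volume x = ENNReal.ofReal C := by
      filter_upwards [ae_restrict_mem measurableSet_Ioo, ae_restrict_of_ae hrnC] with x h1 h2
      exact h2 h1
    rw [lintegral_congr_ae this, lintegral_const, Measure.restrict_apply_univ,
      Real.volume_Ioo, ← ENNReal.ofReal_mul hC]
  have hIoc2 : s1.measure (Set.Ioc 1 T) = ENNReal.ofReal (s1 T - s1 1) := s1.measure_Ioc 1 T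
  rw [hIoc] at hIoc2
  have hnn : (0:ℝ) ≤ s1 T - s1 1 := sub_nonneg.2 (s1.mono hT)
  have heq : C * (T - 1) = s1 T - s1 1 :=
    (ENNReal.ofReal_eq_ofReal_iff (by nlinarith) hnn).mp hIoc2
  have hcT : c T = T := by rw [hc]; simp [hT, min_self]
  have hc1 : c 1 = 1 := by rw [hc]; simp [hT]
  have : s1 T = m T + C * T := rfl
  have h1 : s1 1 = m 1 + C * 1 := rfl
  have hmT : m T = f T := by rw [hm]; simp only; rw [hcT]
  have hm1 : m 1 = f 1 := by rw [hm]; simp only; rw [hc1]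
  rw [this, h1, hmT, hm1] at heq
  linarith

lemma clamp_int (f : ℝ → ℝ) (hf : ∀ t, 1 ≤ t → IntervalIntegrable f volume 1 t) :
    ∀ a b : ℝ, IntervalIntegrable (fun s => f (max s 1)) volume a b := by
  have H : ∀ c : ℝ, IntervalIntegrable (fun s => f (max s 1)) volume 1 c := by
    intro c
    rcases le_total 1 c with h | h
    · rw [intervalIntegrable_iff_integrableOn_Ioc_of_le h]
      refine ((intervalIntegrable_iff_integrableOn_Ioc_of_le h).mp (hf c h)).congr_fun ?_
        measurableSet_Ioc
      intro x hx; simp only; rw [max_eq_left hx.1.le]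
    · rw [intervalIntegrable_iff]
      have h2 : Set.uIoc (1:ℝ) c = Set.Ioc c 1 := Set.uIoc_of_ge h
      rw [h2]
      refine ((integrableOn_const_iff (C := f 1)).mpr (Or.inr measure_Ioc_lt_top)).congr_fun ?_ measurableSet_Ioc
      intro x hx; simp only; rw [max_eq_right hx.2]
  intro a b
  exact (H a).symm.trans (H b)

set_option maxHeartbeats 1000000 in
lemma master {ι κ : Type*} [Fintype ι] [Nonempty ι] [Fintype κ] [Nonempty κ]
    (U : ι → κ → ℝ) (y : ℝ → κ → ℝ) (p : ℝ → κ → ℝ) (q : ℝ → ι → ℝ) (w : ℝ → ℝ) (M : ℝ)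
    (hM : ∀ k b, |U k b| ≤ M)
    (hybd : ∀ t, 1 ≤ t → ∀ b, 0 ≤ y t b ∧ y t b ≤ 1)
    (hpbd : ∀ t, 1 ≤ t → (∀ b, 0 ≤ p t b) ∧ ∑ b, p t b = 1)
    (hqbd : ∀ t, 1 ≤ t → (∀ k, 0 ≤ q t k) ∧ ∑ k, q t k = 1)
    (hwbd : ∀ t, 1 ≤ t → |w t| ≤ M)
    (hyint : ∀ b, ∀ t, 1 ≤ t → IntervalIntegrable (fun s => (1/s) * (p s b - y s b)) volume 1 t)
    (hy : ∀ b, ∀ t, 1 ≤ t → y t b = y 1 b + ∫ s in (1:ℝ)..t, (1/s) * (p s b - y s b))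
    (hwint : ∀ t, 1 ≤ t → IntervalIntegrable
      (fun s => (1/s) * ((∑ k, q s k * ∑ b, p s b * U k b) - w s)) volume 1 t)
    (hw : ∀ t, 1 ≤ t →
      w t = w 1 + ∫ s in (1:ℝ)..t, (1/s) * ((∑ k, q s k * ∑ b, p s b * U k b) - w s))
    (hbr : ∀ t, 1 ≤ t → ∑ k, q t k * (∑ b, y t b * U k b)
        = Finset.univ.sup' Finset.univ_nonempty (fun k => ∑ b, y t b * U k b)) :
    ∀ t, 1 ≤ t →
      t * (Finset.univ.sup' Finset.univ_nonempty (fun k => ∑ b, y t b * U k b) - w t)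
       = Finset.univ.sup' Finset.univ_nonempty (fun k => ∑ b, y 1 b * U k b) - w 1 := by
  have hM0 : 0 ≤ M := (abs_nonneg _).trans (hM (Classical.arbitrary ι) (Classical.arbitrary κ))
  -- clamped integrands
  set gy : κ → ℝ → ℝ := fun b s => (1/(max s 1)) * (p (max s 1) b - y (max s 1) b) with hgy
  set gw : ℝ → ℝ := fun s =>
    (1/(max s 1)) * ((∑ k, q (max s 1) k * ∑ b, p (max s 1) b * U k b) - w (max s 1)) with hgw
  have hgyint : ∀ b, ∀ a c : ℝ, IntervalIntegrable (gy b) volume a c := by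
    intro b a c
    exact clamp_int (fun r => (1/r) * (p r b - y r b)) (hyint b) a c
  have hgwint : ∀ a c : ℝ, IntervalIntegrable gw volume a c := by
    intro a c
    exact clamp_int (fun r => (1/r) * ((∑ k, q r k * ∑ b, p r b * U k b) - w r)) hwint a c
  set Fy : κ → ℝ → ℝ := fun b t => ∫ s in (1:ℝ)..t, gy b s with hFy
  set Fw : ℝ → ℝ := fun t => ∫ s in (1:ℝ)..t, gw s with hFw
  have hFyeq : ∀ b, ∀ t, 1 ≤ t → y t b = y 1 b + Fy b t := by
    intro b t ht
    rw [hy b t ht]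
    congr 1
    refine (intervalIntegral.integral_congr ?_).symm
    intro s hs
    rw [Set.uIcc_of_le ht] at hs
    simp only [hgy, max_eq_left hs.1]
  have hFweq : ∀ t, 1 ≤ t → w t = w 1 + Fw t := by
    intro t ht
    rw [hw t ht]
    congr 1
    refine (intervalIntegral.integral_congr ?_).symm
    intro s hs
    rw [Set.uIcc_of_le ht] at hs
    simp only [hgw, max_eq_left hs.1]
  -- global objects
  set yext : ℝ → κ → ℝ := fun t b => y 1 b + Fy b t with hyext
  set wext : ℝ → ℝ := fun t => w 1 + Fw t with hwext
  set A : ι → ℝ → ℝ := fun k t => (∑ b, yext t b * U k b) - wext t with hA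
  set G : ι → ℝ → ℝ := fun k t => t * A k t with hG
  set h : ℝ → ℝ := fun t => Finset.univ.sup' Finset.univ_nonempty (fun k => G k t) with hh
  have hyea : ∀ t, 1 ≤ t → ∀ b, yext t b = y t b := fun t ht b => (hFyeq b t ht).symm
  have hwea : ∀ t, 1 ≤ t → wext t = w t := fun t ht => (hFweq t ht).symm
  have hAea : ∀ t, 1 ≤ t → ∀ k, A k t = (∑ b, y t b * U k b) - w t := by
    intro t ht k
    simp only [hA, hwea t ht]
    congr 1
    exact Finset.sum_congr rfl fun b _ => by rw [hyea t ht b]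
  have hsup : ∀ t, 1 ≤ t →
      h t = t * (Finset.univ.sup' Finset.univ_nonempty (fun k => ∑ b, y t b * U k b) - w t) := by
    intro t ht
    have ht0 : (0:ℝ) ≤ t := by linarith
    have hcomp := Finset.comp_sup'_eq_sup'_comp (Finset.univ_nonempty (α := ι))
      (f := fun k => ∑ b, y t b * U k b) (g := fun v => t * (v - w t)) ?_
    · simp only [Function.comp_def] at hcomp
      have h2 : (fun k => G k t) = fun k => t * ((∑ b, y t b * U k b) - w t) := by
        funext k; rw [hG]; simp only; rw [hAea t ht k]
      rw [hh]
      show (Finset.univ.sup' Finset.univ_nonempty fun k => G k t) = _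
      rw [h2]
      exact hcomp.symm
    · intro x v
      show t * ((x ⊔ v) - w t) = (t * (x - w t)) ⊔ (t * (v - w t))
      rw [← max_sub_sub_right x v (w t)]
      exact mul_max_of_nonneg _ _ ht0
  -- support property
  have hsupp : ∀ t, 1 ≤ t → ∀ k, q t k ≠ 0 →
      (∑ b, y t b * U k b) = Finset.univ.sup' Finset.univ_nonempty
        (fun k => ∑ b, y t b * U k b) := by
    intro t ht k hk
    set S := Finset.univ.sup' Finset.univ_nonempty (fun k => ∑ b, y t b * U k b) with hS
    have hfle : ∀ j : ι, (∑ b, y t b * U j b) ≤ S := fun j =>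
      Finset.le_sup' (fun k => ∑ b, y t b * U k b) (Finset.mem_univ j)
    have hzero : ∑ j, q t j * (S - ∑ b, y t b * U j b) = 0 := by
      have e1 : ∑ j, q t j * (S - ∑ b, y t b * U j b)
          = (∑ j, q t j) * S - ∑ j, q t j * (∑ b, y t b * U j b) := by
        rw [Finset.sum_mul]
        rw [← Finset.sum_sub_distrib]
        exact Finset.sum_congr rfl fun j _ => by ring
      rw [e1, (hqbd t ht).2, hbr t ht, one_mul, sub_self]
    have hnn : ∀ j ∈ Finset.univ, 0 ≤ q t j * (S - ∑ b, y t b * U j b) := fun j _ =>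
      mul_nonneg ((hqbd t ht).1 j) (by linarith [hfle j])
    have := (Finset.sum_eq_zero_iff_of_nonneg hnn).mp hzero k (Finset.mem_univ k)
    rcases mul_eq_zero.mp this with h | h
    · exact absurd h hk
    · linarith [hfle k]
  have hG0 : ∀ t, 1 ≤ t → ∀ k, q t k ≠ 0 → G k t = h t := by
    intro t ht k hk
    rw [hsup t ht, hG]
    simp only
    rw [hAea t ht k, hsupp t ht k hk]
  -- pointwise bounds
  have hy01 : ∀ r, 1 ≤ r → ∀ b, 0 ≤ y r b ∧ y r b ≤ 1 := hybd
  have hp01 : ∀ r, 1 ≤ r → ∀ b, 0 ≤ p r b ∧ p r b ≤ 1 := by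
    intro r hr b
    refine ⟨(hpbd r hr).1 b, ?_⟩
    rw [← (hpbd r hr).2]
    exact Finset.single_le_sum (fun j _ => (hpbd r hr).1 j) (Finset.mem_univ b)
  have he_bd : ∀ r, 1 ≤ r → ∀ k, |∑ b, p r b * U k b| ≤ M := by
    intro r hr k
    refine (Finset.abs_sum_le_sum_abs _ _).trans ?_
    have : ∀ b ∈ Finset.univ, |p r b * U k b| ≤ p r b * M := fun b _ => by
      rw [abs_mul, abs_of_nonneg ((hp01 r hr b).1)]
      exact mul_le_mul_of_nonneg_left (hM k b) ((hp01 r hr b).1)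
    refine (Finset.sum_le_sum this).trans ?_
    rw [← Finset.sum_mul, (hpbd r hr).2, one_mul]
  have hW_bd : ∀ r, 1 ≤ r → |∑ k, q r k * ∑ b, p r b * U k b| ≤ M := by
    intro r hr
    refine (Finset.abs_sum_le_sum_abs _ _).trans ?_
    have : ∀ j ∈ Finset.univ, |q r j * ∑ b, p r b * U j b| ≤ q r j * M := fun j _ => by
      rw [abs_mul, abs_of_nonneg ((hqbd r hr).1 j)]
      exact mul_le_mul_of_nonneg_left (he_bd r hr j) ((hqbd r hr).1 j)
    refine (Finset.sum_le_sum this).trans ?_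
    rw [← Finset.sum_mul, (hqbd r hr).2, one_mul]
  have hgy_bd : ∀ b, ∀ r : ℝ, |gy b r| ≤ 1 := by
    intro b r
    have h1 : (1:ℝ) ≤ max r 1 := le_max_right r 1
    rw [hgy]
    simp only
    rw [abs_mul]
    have h2 : |1/(max r 1)| ≤ 1 := by
      rw [abs_of_nonneg (by positivity)]
      rw [div_le_one (by linarith)]; linarith
    have h3 : |p (max r 1) b - y (max r 1) b| ≤ 1 := by
      have hp := hp01 _ h1 b; have hy := hy01 _ h1 b
      rw [abs_le]; constructor <;> [linarith [hp.1, hy.2]; linarith [hp.2, hy.1]]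
    calc |1/(max r 1)| * |p (max r 1) b - y (max r 1) b| ≤ 1 * 1 :=
          mul_le_mul h2 h3 (abs_nonneg _) zero_le_one
      _ = 1 := mul_one 1
  have hgw_bd : ∀ r : ℝ, |gw r| ≤ 2 * M := by
    intro r
    have h1 : (1:ℝ) ≤ max r 1 := le_max_right r 1
    rw [hgw]
    simp only
    rw [abs_mul]
    have h2 : |1/(max r 1)| ≤ 1 := by
      rw [abs_of_nonneg (by positivity)]
      rw [div_le_one (by linarith)]; linarith
    have h3 : |(∑ k, q (max r 1) k * ∑ b, p (max r 1) b * U k b) - w (max r 1)| ≤ 2 * M := by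
      have := hW_bd _ h1; have := hwbd _ h1
      rw [abs_le] at *
      constructor <;> linarith [this.1, this.2]
    calc |1/(max r 1)| * |(∑ k, q (max r 1) k * ∑ b, p (max r 1) b * U k b) - w (max r 1)|
        ≤ 1 * (2 * M) := mul_le_mul h2 h3 (abs_nonneg _) zero_le_one
      _ = 2 * M := one_mul _
  -- Lipschitz estimates
  have hFyL : ∀ b, ∀ s t : ℝ, |Fy b t - Fy b s| ≤ |t - s| := by
    intro b s t
    have hsub : Fy b t - Fy b s = ∫ r in s..t, gy b r :=
      intervalIntegral.integral_interval_sub_left (hgyint b 1 t) (hgyint b 1 s)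
    rw [hsub, ← Real.norm_eq_abs]
    have := intervalIntegral.norm_integral_le_of_norm_le_const
      (C := 1) (f := gy b) (a := s) (b := t) (fun x _ => by
        rw [Real.norm_eq_abs]; exact hgy_bd b x)
    simpa using this
  have hFwL : ∀ s t : ℝ, |Fw t - Fw s| ≤ (2*M) * |t - s| := by
    intro s t
    have hsub : Fw t - Fw s = ∫ r in s..t, gw r :=
      intervalIntegral.integral_interval_sub_left (hgwint 1 t) (hgwint 1 s)
    rw [hsub, ← Real.norm_eq_abs]
    have := intervalIntegral.norm_integral_le_of_norm_le_const
      (C := 2*M) (f := gw) (a := s) (b := t) (fun x _ => by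
        rw [Real.norm_eq_abs]; exact hgw_bd x)
    simpa using this
  -- cardinality constant
  set K : ℝ := (Fintype.card κ : ℝ) with hK
  have hK0 : 0 ≤ K := by positivity
  have hAL : ∀ k, ∀ s t : ℝ, |A k t - A k s| ≤ (K * M + 2 * M) * |t - s| := by
    intro k s t
    have e1 : A k t - A k s = (∑ b, (Fy b t - Fy b s) * U k b) - (Fw t - Fw s) := by
      rw [hA]
      simp only [hyext, hwext]
      rw [show ∑ b, (Fy b t - Fy b s) * U k b
          = (∑ b, (y 1 b + Fy b t) * U k b) - ∑ b, (y 1 b + Fy b s) * U k b by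
        rw [← Finset.sum_sub_distrib]
        exact Finset.sum_congr rfl fun b _ => by ring]
      ring
    have h3 : |∑ b, (Fy b t - Fy b s) * U k b| ≤ K * (|t - s| * M) := by
      refine (Finset.abs_sum_le_sum_abs _ _).trans ?_
      have hterm : ∀ b ∈ Finset.univ, |(Fy b t - Fy b s) * U k b| ≤ |t - s| * M := fun b _ => by
        rw [abs_mul]
        exact mul_le_mul (hFyL b s t) (hM k b) (abs_nonneg _) (abs_nonneg _)
      refine (Finset.sum_le_sum hterm).trans ?_
      rw [Finset.sum_const, Finset.card_univ, nsmul_eq_mul, hK]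
    have h4 := hFwL s t
    rw [e1]
    have := abs_sub (∑ b, (Fy b t - Fy b s) * U k b) (Fw t - Fw s)
    calc |(∑ b, (Fy b t - Fy b s) * U k b) - (Fw t - Fw s)|
        ≤ |∑ b, (Fy b t - Fy b s) * U k b| + |Fw t - Fw s| := abs_sub _ _
      _ ≤ K * (|t - s| * M) + (2*M) * |t - s| := add_le_add h3 h4
      _ = (K * M + 2 * M) * |t - s| := by ring
  have hAbd : ∀ k, ∀ s : ℝ, 1 ≤ s → |A k s| ≤ K * M + M := by
    intro k s hs
    rw [hAea s hs k]
    have h1 : |∑ b, y s b * U k b| ≤ K * M := by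
      refine (Finset.abs_sum_le_sum_abs _ _).trans ?_
      have hterm : ∀ b ∈ Finset.univ, |y s b * U k b| ≤ M := fun b _ => by
        rw [abs_mul]
        have := hy01 s hs b
        calc |y s b| * |U k b| ≤ 1 * M :=
          mul_le_mul (by rw [abs_of_nonneg this.1]; exact this.2) (hM k b) (abs_nonneg _) zero_le_one
          _ = M := one_mul M
      refine (Finset.sum_le_sum hterm).trans ?_
      rw [Finset.sum_const, Finset.card_univ, nsmul_eq_mul, hK]
    have h2 := hwbd s hs
    calc |(∑ b, y s b * U k b) - w s| ≤ |∑ b, y s b * U k b| + |w s| := abs_sub _ _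
      _ ≤ K * M + M := add_le_add h1 h2
  -- envelope derivative, almost everywhere
  have hae2 : ∀ᵐ x : ℝ, (∀ b, HasDerivAt (Fy b) (gy b x) x) ∧ HasDerivAt Fw (gw x) x := by
    refine ((ae_all_iff).2 ?_).and ?_
    · intro b
      have := ftc_ae (gy b) (hgyint b)
      filter_upwards [this] with x hx
      rw [hFy]
      exact hx
    · have := ftc_ae gw hgwint
      filter_upwards [this] with x hx
      rw [hFw]
      exact hx
  have hGder : ∀ᵐ x : ℝ, 1 < x → ∀ k, HasDerivAt (G k)
      ((∑ b, p x b * U k b) - (∑ j, q x j * ∑ b, p x b * U j b)) x := by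
    filter_upwards [hae2] with x hx hx1 k
    have hx0 : x ≠ 0 := ne_of_gt (by linarith)
    have hclx : max x 1 = x := max_eq_left hx1.le
    have hyd : ∀ b, HasDerivAt (fun t => yext t b) (gy b x) x := fun b => (hx.1 b).const_add (y 1 b)
    have hsumd : HasDerivAt (fun t => ∑ b, yext t b * U k b) (∑ b, gy b x * U k b) x :=
      HasDerivAt.fun_sum (fun b _ => (hyd b).mul_const (U k b))
    have hwd : HasDerivAt wext (gw x) x := (hx.2).const_add (w 1)
    have hAd : HasDerivAt (A k) ((∑ b, gy b x * U k b) - gw x) x := hsumd.sub hwd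
    have hGd : HasDerivAt (G k) (1 * A k x + x * ((∑ b, gy b x * U k b) - gw x)) x :=
      (hasDerivAt_id x).mul hAd
    convert hGd using 1
    have hgyx : ∀ b, gy b x = (1/x) * (p x b - y x b) := fun b => by
      rw [hgy]; simp only [hclx]
    have hgwx : gw x = (1/x) * ((∑ j, q x j * ∑ b, p x b * U j b) - w x) := by
      rw [hgw]; simp only [hclx]
    rw [hAea x hx1.le k]
    simp only [hgyx, hgwx]
    rw [show ∑ b, (1/x) * (p x b - y x b) * U k b
        = (1/x) * ((∑ b, p x b * U k b) - (∑ b, y x b * U k b)) by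
      rw [mul_sub]
      simp only [Finset.mul_sum]
      rw [← Finset.sum_sub_distrib]
      exact Finset.sum_congr rfl fun b _ => by ring]
    field_simp
    ring
  -- main argument for fixed horizon T
  intro T hT
  set CT : ℝ := T * (K * M + 2 * M) + (K * M + M) with hCT
  have hCT0 : 0 ≤ CT := by
    have h1 : (0:ℝ) ≤ K * M + 2 * M := by nlinarith
    have h2 : (0:ℝ) ≤ K * M + M := by nlinarith
    nlinarith
  have hGL : ∀ k, ∀ s ∈ Set.Icc (1:ℝ) T, ∀ t ∈ Set.Icc (1:ℝ) T,
      |G k t - G k s| ≤ CT * |t - s| := by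
    intro k s hs t hts
    have e1 : G k t - G k s = t * (A k t - A k s) + (t - s) * A k s := by
      rw [hG]; simp only; ring
    rw [e1]
    have h1 : |t * (A k t - A k s)| ≤ T * ((K * M + 2 * M) * |t - s|) := by
      rw [abs_mul]
      refine mul_le_mul ?_ (hAL k s t) (abs_nonneg _) (by linarith [hts.1, hts.2])
      rw [abs_of_nonneg (by linarith [hts.1])]
      exact hts.2
    have h2 : |(t - s) * A k s| ≤ |t - s| * (K * M + M) := by
      rw [abs_mul]
      exact mul_le_mul_of_nonneg_left (hAbd k s hs.1) (abs_nonneg _)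
    calc |t * (A k t - A k s) + (t - s) * A k s|
        ≤ |t * (A k t - A k s)| + |(t - s) * A k s| := abs_add_le _ _
      _ ≤ T * ((K * M + 2 * M) * |t - s|) + |t - s| * (K * M + M) := add_le_add h1 h2
      _ = CT * |t - s| := by rw [hCT]; ring
  have hH1 : ∀ u ∈ Set.Icc (1:ℝ) T, ∀ v ∈ Set.Icc (1:ℝ) T, h v ≤ h u + CT * |v - u| := by
    intro u hu v hv
    rw [hh]
    show (Finset.univ.sup' Finset.univ_nonempty fun k => G k v) ≤ _
    refine Finset.sup'_le _ _ fun k _ => ?_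
    have h1 := abs_le.mp (hGL k u hu v hv)
    have h2 : G k u ≤ h u := by
      rw [hh]; exact Finset.le_sup' (fun j => G j u) (Finset.mem_univ k)
    linarith [h1.2]
  have hhL : ∀ s ∈ Set.Icc (1:ℝ) T, ∀ t ∈ Set.Icc (1:ℝ) T, |h t - h s| ≤ CT * |t - s| := by
    intro s hs t hts
    rw [abs_le]
    constructor
    · have := hH1 t hts s hs
      rw [abs_sub_comm] at this
      linarith
    · have := hH1 s hs t hts
      linarith
  have hder : ∀ᵐ x : ℝ, x ∈ Set.Ioo (1:ℝ) T → ∀ D, HasDerivAt h D x → D = 0 := by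
    filter_upwards [hGder] with x hx hmem D hD
    have hx1 : (1:ℝ) ≤ x := hmem.1.le
    have hDk : ∀ k, q x k ≠ 0 →
        D = (∑ b, p x b * U k b) - (∑ j, q x j * ∑ b, p x b * U j b) := by
      intro k hk
      have hGk := hx hmem.1 k
      have hle : ∀ u, G k u ≤ h u := fun u => by
        rw [hh]; exact Finset.le_sup' (fun j => G j u) (Finset.mem_univ k)
      have heqx : G k x = h x := hG0 x hx1 k hk
      have hmin : IsLocalMin (fun u => h u - G k u) x := by
        refine Filter.Eventually.of_forall fun u => ?_
        simp only
        have := hle u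
        rw [heqx]
        linarith
      have hdd : HasDerivAt (fun u => h u - G k u)
          (D - ((∑ b, p x b * U k b) - (∑ j, q x j * ∑ b, p x b * U j b))) x := hD.sub hGk
      have h0 : D - ((∑ b, p x b * U k b) - (∑ j, q x j * ∑ b, p x b * U j b)) = 0 := by
        rw [← hdd.deriv]
        exact hmin.deriv_eq_zero
      linarith
    have hqx := hqbd x hx1
    have e1 : ∑ k, q x k * ((∑ b, p x b * U k b) - (∑ j, q x j * ∑ b, p x b * U j b)) = 0 := by
      rw [show (∑ k, q x k * ((∑ b, p x b * U k b) - (∑ j, q x j * ∑ b, p x b * U j b)))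
          = (∑ k, q x k * (∑ b, p x b * U k b))
            - (∑ k, q x k) * (∑ j, q x j * ∑ b, p x b * U j b) by
        rw [Finset.sum_mul, ← Finset.sum_sub_distrib]
        exact Finset.sum_congr rfl fun k _ => by ring]
      rw [hqx.2, one_mul, sub_self]
    have e2 : ∑ k, q x k * ((∑ b, p x b * U k b) - (∑ j, q x j * ∑ b, p x b * U j b))
        = ∑ k, q x k * D := by
      refine Finset.sum_congr rfl fun k _ => ?_
      by_cases hk : q x k = 0
      · rw [hk]; ring
      · rw [hDk k hk]
    have e3 : ∑ k, q x k * D = D := by rw [← Finset.sum_mul, hqx.2, one_mul]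
    rw [← e3, ← e2, e1]
  have hfin := const_of_lip_deriv h T CT hT hCT0 hhL hder
  rw [hsup T hT, hsup 1 le_rfl, one_mul] at hfin
  exact hfin

lemma II_congr {f g : ℝ → ℝ} {a b : ℝ} (hf : IntervalIntegrable f volume a b)
    (h : Set.EqOn f g (Set.uIcc a b)) : IntervalIntegrable g volume a b := by
  rw [intervalIntegrable_iff] at *
  exact hf.congr_fun (h.mono Set.uIoc_subset_uIcc) measurableSet_uIoc

lemma II_sum {γ : Type*} (s : Finset γ) {f : γ → ℝ → ℝ} {a b : ℝ}
    (h : ∀ i ∈ s, IntervalIntegrable (f i) volume a b) :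
    IntervalIntegrable (fun x => ∑ i ∈ s, f i x) volume a b := by
  rw [intervalIntegrable_iff]
  exact MeasureTheory.integrable_finset_sum s (fun i hi => intervalIntegrable_iff.mp (h i hi))

set_option maxHeartbeats 1600000 in
/-- along any absolutely continuous solution of continuous fictitious play
(written in integral form), each player's maximal regret v_i satisfies v̇_i = −(1/t)v_i a.e.
where v_i > 0, [v_i(t)]₊ ≤ (1/t)[v_i(1)]₊, and v_i(t) → 0 (convergence to the reduced
Hannan set). -/
theorem stmt_9 {A1 A2 : Type*} [Fintype A1] [Fintype A2] [Nonempty A1] [Nonempty A2]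
    (u1 u2 : A1 → A2 → ℝ)
    (z : ℝ → A1 → A2 → ℝ) (q1 : ℝ → A1 → ℝ) (q2 : ℝ → A2 → ℝ)
    (hz : ∀ t ≥ (1:ℝ), (∀ a b, 0 ≤ z t a b) ∧ ∑ a, ∑ b, z t a b = 1)
    (hq1prob : ∀ t ≥ (1:ℝ), (∀ a, 0 ≤ q1 t a) ∧ ∑ a, q1 t a = 1)
    (hq2prob : ∀ t ≥ (1:ℝ), (∀ b, 0 ≤ q2 t b) ∧ ∑ b, q2 t b = 1)
    -- q1(t) is a mixed best reply of player 1 to the marginal z₂(t)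
    (hbr1 : ∀ t ≥ (1:ℝ), ∑ a, q1 t a * (∑ b, (∑ a', z t a' b) * u1 a b)
        = Finset.univ.sup' Finset.univ_nonempty (fun k => ∑ b, (∑ a', z t a' b) * u1 k b))
    -- q2(t) is a mixed best reply of player 2 to the marginal z₁(t)
    (hbr2 : ∀ t ≥ (1:ℝ), ∑ b, q2 t b * (∑ a, (∑ b', z t a b') * u2 a b)
        = Finset.univ.sup' Finset.univ_nonempty (fun s => ∑ a, (∑ b', z t a b') * u2 a s))
    -- absolutely continuous solution of ż(t) = (1/t)(q₁(t) ⊗ q₂(t) − z(t)), integral form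
    (hint : ∀ a b, ∀ t ≥ (1:ℝ), IntervalIntegrable
      (fun s => (1 / s) * (q1 s a * q2 s b - z s a b)) volume 1 t)
    (hsol : ∀ t ≥ (1:ℝ), ∀ a b,
      z t a b = z 1 a b + ∫ s in (1:ℝ)..t, (1 / s) * (q1 s a * q2 s b - z s a b)) :
    let v1 : ℝ → ℝ := fun t =>
      Finset.univ.sup' Finset.univ_nonempty (fun k => ∑ b, (∑ a', z t a' b) * u1 k b)
        - ∑ a, ∑ b, z t a b * u1 a b
    let v2 : ℝ → ℝ := fun t =>
      Finset.univ.sup' Finset.univ_nonempty (fun s => ∑ a, (∑ b', z t a b') * u2 a s)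
        - ∑ a, ∑ b, z t a b * u2 a b
    ((∀ᵐ t ∂(volume.restrict (Set.Ioi (1:ℝ))),
        0 < v1 t → HasDerivAt v1 (-(1 / t) * v1 t) t)
      ∧ (∀ᵐ t ∂(volume.restrict (Set.Ioi (1:ℝ))),
        0 < v2 t → HasDerivAt v2 (-(1 / t) * v2 t) t))
    ∧ ((∀ t ≥ (1:ℝ), max (v1 t) 0 ≤ (1 / t) * max (v1 1) 0)
      ∧ (∀ t ≥ (1:ℝ), max (v2 t) 0 ≤ (1 / t) * max (v2 1) 0))
    ∧ (Tendsto v1 atTop (nhds 0) ∧ Tendsto v2 atTop (nhds 0)) := by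
  intro v1 v2
  have hz1 : ∀ t, 1 ≤ t → ∀ a b, z t a b ≤ 1 := by
    intro t ht a b
    have h1 : z t a b ≤ ∑ b', z t a b' :=
      Finset.single_le_sum (f := fun b' => z t a b') (fun j _ => (hz t ht).1 a j)
        (Finset.mem_univ b)
    have h2 : ∑ b', z t a b' ≤ ∑ a', ∑ b', z t a' b' :=
      Finset.single_le_sum (f := fun a' => ∑ b', z t a' b')
        (fun j _ => Finset.sum_nonneg fun i _ => (hz t ht).1 j i) (Finset.mem_univ a)
    linarith [(hz t ht).2]
  -- algebraic expansions
  have collapse1 : ∀ (b : A2) (s : ℝ), 1 ≤ s →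
      ∑ a, (1 / s) * (q1 s a * q2 s b - z s a b) = (1 / s) * (q2 s b - ∑ a', z s a' b) := by
    intro b s hs
    rw [← Finset.mul_sum, Finset.sum_sub_distrib, ← Finset.sum_mul, (hq1prob s hs).2, one_mul]
  have collapse2 : ∀ (a : A1) (s : ℝ), 1 ≤ s →
      ∑ b, (1 / s) * (q1 s a * q2 s b - z s a b) = (1 / s) * (q1 s a - ∑ b', z s a b') := by
    intro a s hs
    rw [← Finset.mul_sum, Finset.sum_sub_distrib, ← Finset.mul_sum, (hq2prob s hs).2, mul_one]
  have expand1 : ∀ s : ℝ, (1:ℝ) / s * ((∑ k, q1 s k * ∑ b, q2 s b * u1 k b)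
      - ∑ a, ∑ b, z s a b * u1 a b)
      = ∑ a, ∑ b, ((1 / s) * (q1 s a * q2 s b - z s a b)) * u1 a b := by
    intro s
    rw [mul_sub]
    simp only [Finset.mul_sum]
    rw [← Finset.sum_sub_distrib]
    refine Finset.sum_congr rfl fun a _ => ?_
    rw [← Finset.sum_sub_distrib]
    exact Finset.sum_congr rfl fun b _ => by ring
  have expand2 : ∀ s : ℝ, (1:ℝ) / s * ((∑ k, q2 s k * ∑ a, q1 s a * u2 a k)
      - ∑ a, ∑ b, z s a b * u2 a b)
      = ∑ a, ∑ b, ((1 / s) * (q1 s a * q2 s b - z s a b)) * u2 a b := by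
    intro s
    rw [mul_sub]
    simp only [Finset.mul_sum]
    rw [Finset.sum_comm (f := fun k a => 1 / s * (q2 s k * (q1 s a * u2 a k)))]
    rw [← Finset.sum_sub_distrib]
    refine Finset.sum_congr rfl fun a _ => ?_
    rw [← Finset.sum_sub_distrib]
    exact Finset.sum_congr rfl fun b _ => by ring
  have habs : ∀ (u : A1 → A2 → ℝ) (k : A1) (b : A2), |u k b| ≤ ∑ a, ∑ b', |u a b'| := by
    intro u k b
    have h1 : |u k b| ≤ ∑ b', |u k b'| :=
      Finset.single_le_sum (f := fun b' => |u k b'|) (fun j _ => abs_nonneg _)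
        (Finset.mem_univ b)
    have h2 : ∑ b', |u k b'| ≤ ∑ a, ∑ b', |u a b'| :=
      Finset.single_le_sum (f := fun a => ∑ b', |u a b'|)
        (fun j _ => Finset.sum_nonneg fun i _ => abs_nonneg _) (Finset.mem_univ k)
    linarith
  have hwb : ∀ (u : A1 → A2 → ℝ) (t : ℝ), 1 ≤ t →
      |∑ a, ∑ b, z t a b * u a b| ≤ ∑ a, ∑ b', |u a b'| := by
    intro u t ht
    refine (Finset.abs_sum_le_sum_abs _ _).trans (Finset.sum_le_sum fun a _ => ?_)
    refine (Finset.abs_sum_le_sum_abs _ _).trans (Finset.sum_le_sum fun b _ => ?_)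
    rw [abs_mul, abs_of_nonneg ((hz t ht).1 a b)]
    exact mul_le_of_le_one_left (abs_nonneg _) (hz1 t ht a b)
  -- PLAYER 1
  have key1 : ∀ t, 1 ≤ t →
      t * (Finset.univ.sup' Finset.univ_nonempty
            (fun k => ∑ b, (∑ a', z t a' b) * u1 k b) - ∑ a, ∑ b, z t a b * u1 a b)
        = Finset.univ.sup' Finset.univ_nonempty
            (fun k => ∑ b, (∑ a', z 1 a' b) * u1 k b) - ∑ a, ∑ b, z 1 a b * u1 a b := by
    refine master u1 (fun t b => ∑ a', z t a' b) q2 q1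
      (fun t => ∑ a, ∑ b, z t a b * u1 a b) (∑ a, ∑ b, |u1 a b|)
      (habs u1) ?_ (fun t ht => hq2prob t ht) (fun t ht => hq1prob t ht)
      (fun t ht => hwb u1 t ht) ?_ ?_ ?_ ?_ (fun t ht => hbr1 t ht)
    · -- hybd
      intro t ht b
      refine ⟨Finset.sum_nonneg fun a _ => (hz t ht).1 a b, ?_⟩
      have h2 : ∑ a', z t a' b ≤ ∑ a', ∑ b', z t a' b' :=
        Finset.sum_le_sum fun a _ =>
          Finset.single_le_sum (f := fun b' => z t a b') (fun j _ => (hz t ht).1 a j)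
            (Finset.mem_univ b)
      linarith [(hz t ht).2]
    · -- hyint
      intro b t ht
      refine II_congr (II_sum Finset.univ fun a _ => hint a b t ht) ?_
      intro s hs
      rw [Set.uIcc_of_le ht] at hs
      exact collapse1 b s hs.1
    · -- hy
      intro b t ht
      have e1 : (∑ a', z t a' b) = (∑ a', z 1 a' b)
          + ∑ a', ∫ s in (1:ℝ)..t, (1 / s) * (q1 s a' * q2 s b - z s a' b) := by
        rw [← Finset.sum_add_distrib]
        exact Finset.sum_congr rfl fun a _ => hsol t ht a b
      rw [e1, ← intervalIntegral.integral_finset_sum (fun a _ => hint a b t ht)]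
      congr 1
      refine intervalIntegral.integral_congr fun s hs => ?_
      rw [Set.uIcc_of_le ht] at hs
      exact collapse1 b s hs.1
    · -- hwint
      intro t ht
      have base : IntervalIntegrable
          (fun s => ∑ a, ∑ b, ((1 / s) * (q1 s a * q2 s b - z s a b)) * u1 a b) volume 1 t :=
        II_sum Finset.univ fun a _ =>
          II_sum Finset.univ fun b _ => (hint a b t ht).mul_const (u1 a b)
      exact II_congr base fun s _ => (expand1 s).symm
    · -- hw
      intro t ht
      have e1 : (∑ a, ∑ b, z t a b * u1 a b) = (∑ a, ∑ b, z 1 a b * u1 a b)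
          + ∑ a, ∑ b, ∫ s in (1:ℝ)..t, ((1 / s) * (q1 s a * q2 s b - z s a b)) * u1 a b := by
        rw [← Finset.sum_add_distrib]
        refine Finset.sum_congr rfl fun a _ => ?_
        rw [← Finset.sum_add_distrib]
        refine Finset.sum_congr rfl fun b _ => ?_
        rw [hsol t ht a b, intervalIntegral.integral_mul_const]
        ring
      have e2 : ∑ a, ∑ b, (∫ s in (1:ℝ)..t, ((1 / s) * (q1 s a * q2 s b - z s a b)) * u1 a b)
          = ∫ s in (1:ℝ)..t, ∑ a, ∑ b, ((1 / s) * (q1 s a * q2 s b - z s a b)) * u1 a b := by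
        rw [intervalIntegral.integral_finset_sum (fun a _ =>
          II_sum Finset.univ fun b _ => (hint a b t ht).mul_const (u1 a b))]
        exact Finset.sum_congr rfl fun a _ =>
          (intervalIntegral.integral_finset_sum
            (fun b _ => (hint a b t ht).mul_const (u1 a b))).symm
      rw [e1, e2]
      congr 1
      exact intervalIntegral.integral_congr fun s _ => (expand1 s).symm
  -- PLAYER 2
  have key2 : ∀ t, 1 ≤ t →
      t * (Finset.univ.sup' Finset.univ_nonempty
            (fun k => ∑ a, (∑ b', z t a b') * u2 a k) - ∑ a, ∑ b, z t a b * u2 a b)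
        = Finset.univ.sup' Finset.univ_nonempty
            (fun k => ∑ a, (∑ b', z 1 a b') * u2 a k) - ∑ a, ∑ b, z 1 a b * u2 a b := by
    refine master (fun k a => u2 a k) (fun t a => ∑ b', z t a b') q1 q2
      (fun t => ∑ a, ∑ b, z t a b * u2 a b) (∑ a, ∑ b', |u2 a b'|)
      (fun k a => habs u2 a k) ?_ (fun t ht => hq1prob t ht) (fun t ht => hq2prob t ht)
      (fun t ht => hwb u2 t ht) ?_ ?_ ?_ ?_ (fun t ht => hbr2 t ht)
    · -- hybd
      intro t ht a
      refine ⟨Finset.sum_nonneg fun b _ => (hz t ht).1 a b, ?_⟩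
      have h2 : ∑ b', z t a b' ≤ ∑ a', ∑ b', z t a' b' :=
        Finset.single_le_sum (f := fun a' => ∑ b', z t a' b')
          (fun j _ => Finset.sum_nonneg fun i _ => (hz t ht).1 j i) (Finset.mem_univ a)
      linarith [(hz t ht).2]
    · -- hyint
      intro a t ht
      refine II_congr (II_sum Finset.univ fun b _ => hint a b t ht) ?_
      intro s hs
      rw [Set.uIcc_of_le ht] at hs
      exact collapse2 a s hs.1
    · -- hy
      intro a t ht
      have e1 : (∑ b', z t a b') = (∑ b', z 1 a b')
          + ∑ b', ∫ s in (1:ℝ)..t, (1 / s) * (q1 s a * q2 s b' - z s a b') := by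
        rw [← Finset.sum_add_distrib]
        exact Finset.sum_congr rfl fun b _ => hsol t ht a b
      rw [e1, ← intervalIntegral.integral_finset_sum (fun b _ => hint a b t ht)]
      congr 1
      refine intervalIntegral.integral_congr fun s hs => ?_
      rw [Set.uIcc_of_le ht] at hs
      exact collapse2 a s hs.1
    · -- hwint
      intro t ht
      have base : IntervalIntegrable
          (fun s => ∑ a, ∑ b, ((1 / s) * (q1 s a * q2 s b - z s a b)) * u2 a b) volume 1 t :=
        II_sum Finset.univ fun a _ =>
          II_sum Finset.univ fun b _ => (hint a b t ht).mul_const (u2 a b)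
      exact II_congr base fun s _ => (expand2 s).symm
    · -- hw
      intro t ht
      have e1 : (∑ a, ∑ b, z t a b * u2 a b) = (∑ a, ∑ b, z 1 a b * u2 a b)
          + ∑ a, ∑ b, ∫ s in (1:ℝ)..t, ((1 / s) * (q1 s a * q2 s b - z s a b)) * u2 a b := by
        rw [← Finset.sum_add_distrib]
        refine Finset.sum_congr rfl fun a _ => ?_
        rw [← Finset.sum_add_distrib]
        refine Finset.sum_congr rfl fun b _ => ?_
        rw [hsol t ht a b, intervalIntegral.integral_mul_const]
        ring
      have e2 : ∑ a, ∑ b, (∫ s in (1:ℝ)..t, ((1 / s) * (q1 s a * q2 s b - z s a b)) * u2 a b)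
          = ∫ s in (1:ℝ)..t, ∑ a, ∑ b, ((1 / s) * (q1 s a * q2 s b - z s a b)) * u2 a b := by
        rw [intervalIntegral.integral_finset_sum (fun a _ =>
          II_sum Finset.univ fun b _ => (hint a b t ht).mul_const (u2 a b))]
        exact Finset.sum_congr rfl fun a _ =>
          (intervalIntegral.integral_finset_sum
            (fun b _ => (hint a b t ht).mul_const (u2 a b))).symm
      rw [e1, e2]
      congr 1
      exact intervalIntegral.integral_congr fun s _ => (expand2 s).symm
  -- consequences of t * V t = V 1
  have cons : ∀ (V : ℝ → ℝ), (∀ t, 1 ≤ t → t * V t = V 1) →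
      (∀ᵐ t ∂(volume.restrict (Set.Ioi (1:ℝ))), 0 < V t → HasDerivAt V (-(1/t) * V t) t)
      ∧ (∀ t, 1 ≤ t → max (V t) 0 ≤ (1/t) * max (V 1) 0)
      ∧ Tendsto V atTop (nhds 0) := by
    intro V hV
    have hVeq : ∀ t, 1 ≤ t → V t = (1/t) * V 1 := by
      intro t ht
      have h0 : t ≠ 0 := by intro h; rw [h] at ht; linarith
      have h2 := hV t ht
      field_simp
      linear_combination h2
    refine ⟨?_, ?_, ?_⟩
    · filter_upwards [ae_restrict_mem measurableSet_Ioi] with t ht _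
      have ht1 : (1:ℝ) < t := ht
      have h0 : t ≠ 0 := ne_of_gt (lt_trans zero_lt_one ht1)
      have hev : V =ᶠ[nhds t] fun s => s⁻¹ * V 1 := by
        filter_upwards [isOpen_Ioi.mem_nhds ht] with u hu
        rw [hVeq u (le_of_lt hu), one_div]
      have hd : HasDerivAt (fun s : ℝ => s⁻¹ * V 1) (-(t^2)⁻¹ * V 1) t := by
        simpa using (hasDerivAt_inv h0).mul_const (V 1)
      have hd2 : HasDerivAt V (-(t^2)⁻¹ * V 1) t := hd.congr_of_eventuallyEq hev
      convert hd2 using 1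
      rw [hVeq t ht1.le, one_div, pow_two, mul_inv]
      ring
    · intro t ht
      have h0 : (0:ℝ) ≤ 1/t := by positivity
      rw [hVeq t ht, mul_max_of_nonneg _ _ h0, mul_zero]
    · have h1 : Tendsto (fun s : ℝ => (1/s) * V 1) atTop (nhds 0) := by
        simpa [one_div] using tendsto_inv_atTop_zero.mul_const (V 1)
      exact Tendsto.congr'
        (by filter_upwards [eventually_ge_atTop (1:ℝ)] with s hs
            exact (hVeq s hs).symm) h1
  have c1 := cons (fun t =>
    Finset.univ.sup' Finset.univ_nonempty (fun k => ∑ b, (∑ a', z t a' b) * u1 k b)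
      - ∑ a, ∑ b, z t a b * u1 a b) key1
  have c2 := cons (fun t =>
    Finset.univ.sup' Finset.univ_nonempty (fun s => ∑ a, (∑ b', z t a b') * u2 a s)
      - ∑ a, ∑ b, z t a b * u2 a b) key2
  exact ⟨⟨c1.1, c2.1⟩, ⟨c1.2.1, c2.2.1⟩, c1.2.2, c2.2.2⟩
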